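/- arXiv:2305.17236 — 2 statements merged into one kernel-verified Lean document; each statement's English description precedes it below -/
import Mathlib

section
/- Let C be a preadditive monoidal category in which tensoring is additive in each variable (`MonoidalPreadditive`). Let A, B, P be monoid objects in C and let p : P ⟶ A and q : P ⟶ B be morphisms of monoid objects whose underlying morphisms in C exhibit the underlying object of P as a binary biproduct of the underlying objects of A and B (i.e. there are morphisms i : A ⟶ P and j : B ⟶ P in C satisfying the biproduct identities i ≫ p = 𝟙, j ≫ q = 𝟙, i ≫ q = 0, j ≫ p = 0, p ≫ i + q ≫ j = 𝟙). Then P is separable if and only if both A and B are separable. -/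
open CategoryTheory MonoidalCategory

/-- A monoid object `A` in a monoidal category is *separable* if its multiplication
`μ : A ⊗ A ⟶ A` admits a section `σ : A ⟶ A ⊗ A` which is a morphism of
`A`-bimodule objects from `A` to the free bimodule `A ⊗ A`. -/
def Mon_.IsSeparable {C : Type*} [Category C] [MonoidalCategory C] (A : Mon C) : Prop :=
  ∃ σ : A.X ⟶ A.X ⊗ A.X,
    σ ≫ A.mon.mul = 𝟙 A.X ∧
    A.mon.mul ≫ σ = (A.X ◁ σ) ≫ (α_ A.X A.X A.X).inv ≫ (A.mon.mul ▷ A.X) ∧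
    A.mon.mul ≫ σ = (σ ▷ A.X) ≫ (α_ A.X A.X A.X).hom ≫ (A.X ◁ A.mon.mul)
section Auxiliary

variable {C : Type*} [Category C] [MonoidalCategory C]

private lemma Mon_.sep_of_retract {A P : Mon C} (p : P ⟶ A) (i : A.X ⟶ P.X)
    (hip : i ≫ p.hom = 𝟙 A.X) (hmul : A.mon.mul ≫ i = (i ⊗ₘ i) ≫ P.mon.mul) :
    Mon_.IsSeparable P → Mon_.IsSeparable A := by
  rintro ⟨σ, h1, h2, h3⟩
  rw [← id_tensorHom, ← tensorHom_id] at h2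
  rw [← tensorHom_id, ← id_tensorHom] at h3
  refine ⟨i ≫ σ ≫ (p.hom ⊗ₘ p.hom), ?_, ?_, ?_⟩
  · slice_lhs 3 4 => rw [← IsMonHom.mul_hom p.hom]
    slice_lhs 2 3 => rw [h1]
    simp only [Category.id_comp, hip]
  · rw [← id_tensorHom, ← tensorHom_id]
    have hx : (P.mon.mul ⊗ₘ 𝟙 P.X) ≫ (p.hom ⊗ₘ p.hom)
        = ((p.hom ⊗ₘ p.hom) ⊗ₘ p.hom) ≫ (A.mon.mul ⊗ₘ 𝟙 A.X) := by
      simp only [tensorHom_comp_tensorHom, Category.id_comp, Category.comp_id, IsMonHom.mul_hom]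
    have nat1 : (α_ P.X P.X P.X).inv ≫ ((p.hom ⊗ₘ p.hom) ⊗ₘ p.hom)
        = (p.hom ⊗ₘ (p.hom ⊗ₘ p.hom)) ≫ (α_ A.X A.X A.X).inv :=
      (associator_inv_naturality p.hom p.hom p.hom).symm
    slice_lhs 1 2 => rw [hmul]
    slice_lhs 2 3 => rw [h2]
    slice_lhs 4 5 => rw [hx]
    slice_lhs 3 4 => rw [nat1]
    simp only [tensorHom_comp_tensorHom_assoc, tensorHom_comp_tensorHom, Category.assoc, Category.id_comp,
      Category.comp_id, hip]
  · rw [← tensorHom_id, ← id_tensorHom]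
    have hx : (𝟙 P.X ⊗ₘ P.mon.mul) ≫ (p.hom ⊗ₘ p.hom)
        = (p.hom ⊗ₘ (p.hom ⊗ₘ p.hom)) ≫ (𝟙 A.X ⊗ₘ A.mon.mul) := by
      simp only [tensorHom_comp_tensorHom, Category.id_comp, Category.comp_id, IsMonHom.mul_hom]
    have nat1 : (α_ P.X P.X P.X).hom ≫ (p.hom ⊗ₘ (p.hom ⊗ₘ p.hom))
        = ((p.hom ⊗ₘ p.hom) ⊗ₘ p.hom) ≫ (α_ A.X A.X A.X).hom :=
      (associator_naturality p.hom p.hom p.hom).symm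
    slice_lhs 1 2 => rw [hmul]
    slice_lhs 2 3 => rw [h3]
    slice_lhs 4 5 => rw [hx]
    slice_lhs 3 4 => rw [nat1]
    simp only [tensorHom_comp_tensorHom_assoc, tensorHom_comp_tensorHom, Category.assoc, Category.id_comp,
      Category.comp_id, hip]

private lemma diag_inv {X Q : C}
    (y : Q ⟶ X) (u : X ⟶ Q) (μ : X ⊗ X ⟶ X) (σ : X ⟶ X ⊗ X)
    (huy : u ≫ y = 𝟙 X)
    (hσ : μ ≫ σ = (X ◁ σ) ≫ (α_ X X X).inv ≫ (μ ▷ X)) :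
    (𝟙 Q ⊗ₘ (y ≫ σ ≫ (u ⊗ₘ u))) ≫ (α_ Q Q Q).inv ≫ (((y ⊗ₘ y) ≫ μ ≫ u) ⊗ₘ 𝟙 Q)
      = (y ⊗ₘ y) ≫ μ ≫ σ ≫ (u ⊗ₘ u) := by
  rw [← id_tensorHom, ← tensorHom_id] at hσ
  have h1 : (𝟙 Q ⊗ₘ (y ≫ σ ≫ (u ⊗ₘ u))) = (𝟙 Q ⊗ₘ (y ≫ σ)) ≫ (𝟙 Q ⊗ₘ (u ⊗ₘ u)) := by
    simp only [tensorHom_comp_tensorHom, Category.id_comp, Category.assoc]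
  rw [h1, Category.assoc, reassoc_of% (associator_inv_naturality (𝟙 Q) u u)]
  have h2 : ((𝟙 Q ⊗ₘ u) ⊗ₘ u) ≫ (((y ⊗ₘ y) ≫ μ ≫ u) ⊗ₘ 𝟙 Q)
      = (((y ⊗ₘ 𝟙 X) ≫ μ ≫ u) ⊗ₘ u) := by
    simp only [tensorHom_comp_tensorHom, tensorHom_comp_tensorHom_assoc, Category.id_comp, Category.comp_id,
      Category.assoc, huy]
  rw [h2, reassoc_of% hσ]
  have h4 : (y ⊗ₘ y) ≫ (𝟙 X ⊗ₘ σ) = (𝟙 Q ⊗ₘ (y ≫ σ)) ≫ (y ⊗ₘ (𝟙 X ⊗ₘ 𝟙 X)) := by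
    simp only [id_tensorHom_id, tensorHom_comp_tensorHom, Category.id_comp, Category.comp_id]
  rw [reassoc_of% h4, reassoc_of% (associator_inv_naturality y (𝟙 X) (𝟙 X))]
  simp only [tensorHom_comp_tensorHom_assoc, tensorHom_comp_tensorHom, Category.assoc, Category.id_comp,
    Category.comp_id]

private lemma diag_hom {X Q : C}
    (y : Q ⟶ X) (u : X ⟶ Q) (μ : X ⊗ X ⟶ X) (σ : X ⟶ X ⊗ X)
    (huy : u ≫ y = 𝟙 X)
    (hσ : μ ≫ σ = (σ ▷ X) ≫ (α_ X X X).hom ≫ (X ◁ μ)) :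
    ((y ≫ σ ≫ (u ⊗ₘ u)) ⊗ₘ 𝟙 Q) ≫ (α_ Q Q Q).hom ≫ (𝟙 Q ⊗ₘ ((y ⊗ₘ y) ≫ μ ≫ u))
      = (y ⊗ₘ y) ≫ μ ≫ σ ≫ (u ⊗ₘ u) := by
  rw [← tensorHom_id, ← id_tensorHom] at hσ
  have h1 : ((y ≫ σ ≫ (u ⊗ₘ u)) ⊗ₘ 𝟙 Q) = ((y ≫ σ) ⊗ₘ 𝟙 Q) ≫ ((u ⊗ₘ u) ⊗ₘ 𝟙 Q) := by
    simp only [tensorHom_comp_tensorHom, Category.id_comp, Category.comp_id, Category.assoc]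
  rw [h1, Category.assoc, reassoc_of% (associator_naturality u u (𝟙 Q))]
  have h2 : (u ⊗ₘ (u ⊗ₘ 𝟙 Q)) ≫ (𝟙 Q ⊗ₘ ((y ⊗ₘ y) ≫ μ ≫ u))
      = (u ⊗ₘ ((𝟙 X ⊗ₘ y) ≫ μ ≫ u)) := by
    simp only [tensorHom_comp_tensorHom, tensorHom_comp_tensorHom_assoc, Category.id_comp, Category.comp_id,
      Category.assoc, huy]
  rw [h2, reassoc_of% hσ]
  have h4 : (y ⊗ₘ y) ≫ (σ ⊗ₘ 𝟙 X) = ((y ≫ σ) ⊗ₘ 𝟙 Q) ≫ ((𝟙 X ⊗ₘ 𝟙 X) ⊗ₘ y) := by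
    simp only [id_tensorHom_id, tensorHom_comp_tensorHom, Category.id_comp, Category.comp_id]
  rw [reassoc_of% h4, reassoc_of% (associator_naturality (𝟙 X) (𝟙 X) y)]
  simp only [tensorHom_comp_tensorHom_assoc, tensorHom_comp_tensorHom, Category.assoc, Category.id_comp,
    Category.comp_id]

variable [Preadditive C] [MonoidalPreadditive C]

private lemma cross_inv {X Y Q : C}
    (x : Q ⟶ X) (y : Q ⟶ Y) (u : X ⟶ Q) (v : Y ⟶ Q)
    (σ : X ⟶ X ⊗ X) (μ : Y ⊗ Y ⟶ Y) (huy : u ≫ y = 0) :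
    (𝟙 Q ⊗ₘ (x ≫ σ ≫ (u ⊗ₘ u))) ≫ (α_ Q Q Q).inv ≫ (((y ⊗ₘ y) ≫ μ ≫ v) ⊗ₘ 𝟙 Q) = 0 := by
  have h1 : (𝟙 Q ⊗ₘ (x ≫ σ ≫ (u ⊗ₘ u))) = (𝟙 Q ⊗ₘ (x ≫ σ)) ≫ (𝟙 Q ⊗ₘ (u ⊗ₘ u)) := by
    simp only [tensorHom_comp_tensorHom, Category.id_comp, Category.assoc]
  rw [h1, Category.assoc, reassoc_of% (associator_inv_naturality (𝟙 Q) u u)]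
  have h2 : ((𝟙 Q ⊗ₘ u) ⊗ₘ u) ≫ (((y ⊗ₘ y) ≫ μ ≫ v) ⊗ₘ 𝟙 Q) = 0 := by
    simp only [tensorHom_comp_tensorHom, tensorHom_comp_tensorHom_assoc, Category.id_comp, Category.comp_id,
      Category.assoc, huy, MonoidalPreadditive.tensor_zero, MonoidalPreadditive.zero_tensor,
      Limits.zero_comp, Limits.comp_zero]
  rw [h2]
  simp only [Limits.comp_zero]

private lemma cross_hom {X Y Q : C}
    (x : Q ⟶ X) (y : Q ⟶ Y) (u : X ⟶ Q) (v : Y ⟶ Q)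
    (σ : X ⟶ X ⊗ X) (μ : Y ⊗ Y ⟶ Y) (huy : u ≫ y = 0) :
    ((x ≫ σ ≫ (u ⊗ₘ u)) ⊗ₘ 𝟙 Q) ≫ (α_ Q Q Q).hom ≫ (𝟙 Q ⊗ₘ ((y ⊗ₘ y) ≫ μ ≫ v)) = 0 := by
  have h1 : ((x ≫ σ ≫ (u ⊗ₘ u)) ⊗ₘ 𝟙 Q) = ((x ≫ σ) ⊗ₘ 𝟙 Q) ≫ ((u ⊗ₘ u) ⊗ₘ 𝟙 Q) := by
    simp only [tensorHom_comp_tensorHom, Category.id_comp, Category.comp_id, Category.assoc]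
  rw [h1, Category.assoc, reassoc_of% (associator_naturality u u (𝟙 Q))]
  have h2 : (u ⊗ₘ (u ⊗ₘ 𝟙 Q)) ≫ (𝟙 Q ⊗ₘ ((y ⊗ₘ y) ≫ μ ≫ v)) = 0 := by
    simp only [tensorHom_comp_tensorHom, tensorHom_comp_tensorHom_assoc, Category.id_comp, Category.comp_id,
      Category.assoc, huy, MonoidalPreadditive.tensor_zero, MonoidalPreadditive.zero_tensor,
      Limits.zero_comp, Limits.comp_zero]
  rw [h2]
  simp only [Limits.comp_zero]

end Auxiliary

/-- In a preadditive monoidal category, if the underlying object of a monoid object `P`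
is a biproduct of the underlying objects of monoid objects `A` and `B`, via morphisms of
monoid objects `p : P ⟶ A` and `q : P ⟶ B`, then `P` is separable if and only if both
`A` and `B` are separable. -/
theorem Mon_.isSeparable_biproduct_iff {C : Type*} [Category C] [MonoidalCategory C]
    [Preadditive C] [MonoidalPreadditive C]
    {A B P : Mon C} (p : P ⟶ A) (q : P ⟶ B) (i : A.X ⟶ P.X) (j : B.X ⟶ P.X)
    (hip : i ≫ p.hom = 𝟙 A.X) (hjq : j ≫ q.hom = 𝟙 B.X)
    (hiq : i ≫ q.hom = 0) (hjp : j ≫ p.hom = 0)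
    (htotal : p.hom ≫ i + q.hom ≫ j = 𝟙 P.X) :
    Mon_.IsSeparable P ↔ Mon_.IsSeparable A ∧ Mon_.IsSeparable B := by
  have hmulP : P.mon.mul = (p.hom ⊗ₘ p.hom) ≫ A.mon.mul ≫ i + (q.hom ⊗ₘ q.hom) ≫ B.mon.mul ≫ j := by
    conv_lhs => rw [← Category.comp_id P.mon.mul, ← htotal]
    simp only [Preadditive.comp_add, IsMonHom.mul_hom_assoc]
  have hmulA : A.mon.mul ≫ i = (i ⊗ₘ i) ≫ P.mon.mul := by
    rw [hmulP]
    simp only [Preadditive.comp_add, tensorHom_comp_tensorHom_assoc, hip, hiq, id_tensorHom_id,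
      Category.id_comp, MonoidalPreadditive.tensor_zero, Limits.zero_comp, add_zero]
  have hmulB : B.mon.mul ≫ j = (j ⊗ₘ j) ≫ P.mon.mul := by
    rw [hmulP]
    simp only [Preadditive.comp_add, tensorHom_comp_tensorHom_assoc, hjq, hjp, id_tensorHom_id,
      Category.id_comp, MonoidalPreadditive.tensor_zero, Limits.zero_comp, add_zero, zero_add]
  constructor
  · intro hP
    exact ⟨Mon_.sep_of_retract p i hip hmulA hP, Mon_.sep_of_retract q j hjq hmulB hP⟩
  · rintro ⟨⟨σA, ha1, ha2, ha3⟩, ⟨σB, hb1, hb2, hb3⟩⟩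
    refine ⟨p.hom ≫ σA ≫ (i ⊗ₘ i) + q.hom ≫ σB ≫ (j ⊗ₘ j), ?_, ?_, ?_⟩
    · have e1 : σA ≫ A.mon.mul ≫ i = i := by rw [← Category.assoc, ha1, Category.id_comp]
      have e2 : σB ≫ B.mon.mul ≫ j = j := by rw [← Category.assoc, hb1, Category.id_comp]
      simp only [Preadditive.add_comp, Category.assoc, ← hmulA, ← hmulB]
      rw [e1, e2, htotal]
    · rw [← id_tensorHom, ← tensorHom_id]
      conv_rhs => rw [hmulP]
      simp only [Preadditive.comp_add, Preadditive.add_comp, MonoidalPreadditive.tensor_add,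
        MonoidalPreadditive.add_tensor, Category.assoc, IsMonHom.mul_hom_assoc]
      rw [diag_inv p.hom i A.mon.mul σA hip ha2, cross_inv p.hom q.hom i j σA B.mon.mul hiq,
        cross_inv q.hom p.hom j i σB A.mon.mul hjp, diag_inv q.hom j B.mon.mul σB hjq hb2]
      abel
    · rw [← tensorHom_id, ← id_tensorHom]
      conv_rhs => rw [hmulP]
      simp only [Preadditive.comp_add, Preadditive.add_comp, MonoidalPreadditive.tensor_add,
        MonoidalPreadditive.add_tensor, Category.assoc, IsMonHom.mul_hom_assoc]
      rw [diag_hom p.hom i A.mon.mul σA hip ha3, cross_hom p.hom q.hom i j σA B.mon.mul hiq,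
        cross_hom q.hom p.hom j i σB A.mon.mul hjp, diag_hom q.hom j B.mon.mul σB hjq hb3]
      abel
end

section
/- Let C be a monoidal category with coequalizers in which tensoring on either side preserves coequalizers, and let A be a separable monoid object in C. Let M be a right A-module object and N a left A-module object, and let M ⊗_A N be their relative tensor product, i.e. the coequalizer of the two canonical maps (M ⊗ A) ⊗ N ⇉ M ⊗ N given by the right action of A on M and (via the associator) the left action of A on N. Then the coequalizer projection π : M ⊗ N ⟶ M ⊗_A N admits a section in C; in particular M ⊗_A N is a retract of M ⊗ N in C. -/
open CategoryTheory MonoidalCategory Limits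

private lemma sep_casL {C : Type*} [Category C] [MonoidalCategory C] (A : Mon C)
    (σ : A.X ⟶ A.X ⊗ A.X)
    (hσ2 : A.mon.mul ≫ σ = (A.X ◁ σ) ≫ (α_ A.X A.X A.X).inv ≫ (A.mon.mul ▷ A.X)) :
    σ = (ρ_ A.X).inv ≫ (A.X ◁ (A.mon.one ≫ σ)) ≫ (α_ A.X A.X A.X).inv ≫ (A.mon.mul ▷ A.X) := by
  calc σ = (ρ_ A.X).inv ≫ ((A.X ◁ A.mon.one) ≫ A.mon.mul) ≫ σ := by
        rw [MonObj.mul_one A.X]; simp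
    _ = (ρ_ A.X).inv ≫ (A.X ◁ A.mon.one) ≫ (A.X ◁ σ) ≫ (α_ A.X A.X A.X).inv ≫ (A.mon.mul ▷ A.X) := by
        rw [Category.assoc, hσ2]
    _ = _ := by simp only [MonoidalCategory.whiskerLeft_comp, Category.assoc]

private lemma sep_casR {C : Type*} [Category C] [MonoidalCategory C] (A : Mon C)
    (σ : A.X ⟶ A.X ⊗ A.X)
    (hσ3 : A.mon.mul ≫ σ = (σ ▷ A.X) ≫ (α_ A.X A.X A.X).hom ≫ (A.X ◁ A.mon.mul)) :
    σ = (λ_ A.X).inv ≫ ((A.mon.one ≫ σ) ▷ A.X) ≫ (α_ A.X A.X A.X).hom ≫ (A.X ◁ A.mon.mul) := by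
  calc σ = (λ_ A.X).inv ≫ ((A.mon.one ▷ A.X) ≫ A.mon.mul) ≫ σ := by
        rw [MonObj.one_mul A.X]; simp
    _ = (λ_ A.X).inv ≫ (A.mon.one ▷ A.X) ≫ (σ ▷ A.X) ≫ (α_ A.X A.X A.X).hom ≫ (A.X ◁ A.mon.mul) := by
        rw [Category.assoc, hσ3]
    _ = _ := by simp only [comp_whiskerRight, Category.assoc]

private lemma sep_hul {C : Type*} [Category C] [MonoidalCategory C] (A : Mon C) (N : C)
    (l : A.X ⊗ N ⟶ N) (e : 𝟙_ C ⟶ A.X ⊗ A.X) (heμ : e ≫ A.mon.mul = A.mon.one)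
    (hl_one : (A.mon.one ▷ N) ≫ l = (λ_ N).hom)
    (hl_assoc : (A.mon.mul ▷ N) ≫ l = (α_ A.X A.X N).hom ≫ (A.X ◁ l) ≫ l) :
    ((λ_ N).inv ≫ (e ▷ N) ≫ (α_ A.X A.X N).hom ≫ (A.X ◁ l)) ≫ l = 𝟙 N := by
  simp only [Category.assoc, ← hl_assoc, ← comp_whiskerRight_assoc, heμ, hl_one,
    Iso.inv_hom_id]

private lemma sep_hlv {C : Type*} [Category C] [MonoidalCategory C] (A : Mon C) (N : C)
    (l : A.X ⊗ N ⟶ N) (σ : A.X ⟶ A.X ⊗ A.X) (e : 𝟙_ C ⟶ A.X ⊗ A.X)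
    (casR : σ = (λ_ A.X).inv ≫ (e ▷ A.X) ≫ (α_ A.X A.X A.X).hom ≫ (A.X ◁ A.mon.mul))
    (hl_assoc : (A.mon.mul ▷ N) ≫ l = (α_ A.X A.X N).hom ≫ (A.X ◁ l) ≫ l) :
    l ≫ ((λ_ N).inv ≫ (e ▷ N) ≫ (α_ A.X A.X N).hom ≫ (A.X ◁ l)) =
    (σ ▷ N) ≫ (α_ A.X A.X N).hom ≫ (A.X ◁ l) := by
  rw [casR]
  simp only [comp_whiskerRight, Category.assoc]
  rw [associator_naturality_middle_assoc, ← MonoidalCategory.whiskerLeft_comp, hl_assoc]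
  rw [leftUnitor_inv_naturality_assoc, whisker_exchange_assoc,
    associator_naturality_right_assoc]
  simp only [MonoidalCategory.whiskerLeft_comp, Category.assoc]
  monoidal

private lemma sep_hcoeq {C : Type*} [Category C] [MonoidalCategory C] (A : Mon C) (M N : C)
    (r : M ⊗ A.X ⟶ M) (l : A.X ⊗ N ⟶ N) (σ : A.X ⟶ A.X ⊗ A.X) (e : 𝟙_ C ⟶ A.X ⊗ A.X)
    (casL : σ = (ρ_ A.X).inv ≫ (A.X ◁ e) ≫ (α_ A.X A.X A.X).inv ≫ (A.mon.mul ▷ A.X))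
    (hr_assoc : (M ◁ A.mon.mul) ≫ r = (α_ M A.X A.X).inv ≫ (r ▷ A.X) ≫ r)
    (hlv : l ≫ ((λ_ N).inv ≫ (e ▷ N) ≫ (α_ A.X A.X N).hom ≫ (A.X ◁ l)) =
      (σ ▷ N) ≫ (α_ A.X A.X N).hom ≫ (A.X ◁ l)) :
    (r ▷ N) ≫ ((M ◁ ((λ_ N).inv ≫ (e ▷ N) ≫ (α_ A.X A.X N).hom ≫ (A.X ◁ l))) ≫
        (α_ M A.X N).inv ≫ (r ▷ N)) =
    ((α_ M A.X N).hom ≫ (M ◁ l)) ≫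
      ((M ◁ ((λ_ N).inv ≫ (e ▷ N) ≫ (α_ A.X A.X N).hom ≫ (A.X ◁ l))) ≫
        (α_ M A.X N).inv ≫ (r ▷ N)) := by
  conv_rhs => rw [Category.assoc, ← MonoidalCategory.whiskerLeft_comp_assoc, hlv]
  simp only [MonoidalCategory.whiskerLeft_comp, Category.assoc]
  rw [associator_inv_naturality_right_assoc, whisker_exchange]
  rw [casL]
  simp only [MonoidalCategory.whiskerLeft_comp, comp_whiskerRight, Category.assoc]
  conv_rhs =>
    rw [← MonoidalCategory.whiskerLeft_comp_assoc (f := A.mon.mul ▷ A.X ▷ N),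
      associator_naturality_left (f := A.mon.mul), MonoidalCategory.whiskerLeft_comp,
      Category.assoc, associator_inv_naturality_middle_assoc,
      ← comp_whiskerRight_assoc, hr_assoc]
  conv_lhs =>
    rw [← whisker_exchange_assoc, ← whisker_exchange_assoc, ← whisker_exchange_assoc,
      associator_inv_naturality_left_assoc]
  simp only [comp_whiskerRight, Category.assoc]
  monoidal


/-- Over a separable monoid object `A`, the relative tensor product `M ⊗_A N` of a right
`A`-module object `M` (action `r`) and a left `A`-module object `N` (action `l`), i.e.
the coequalizer of the two canonical maps `(M ⊗ A) ⊗ N ⇉ M ⊗ N`, is a retract of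
`M ⊗ N`: the coequalizer projection admits a section in `C`. -/
theorem Mon_.IsSeparable.relativeTensor_retract {C : Type*} [Category C] [MonoidalCategory C]
    [HasCoequalizers C]
    [∀ X : C, PreservesColimitsOfSize.{0, 0} (tensorLeft X)]
    [∀ X : C, PreservesColimitsOfSize.{0, 0} (tensorRight X)]
    {A : Mon C} (hA : Mon_.IsSeparable A)
    (M N : C) (r : M ⊗ A.X ⟶ M) (l : A.X ⊗ N ⟶ N)
    (hr_one : (M ◁ A.mon.one) ≫ r = (ρ_ M).hom)
    (hr_assoc : (M ◁ A.mon.mul) ≫ r = (α_ M A.X A.X).inv ≫ (r ▷ A.X) ≫ r)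
    (hl_one : (A.mon.one ▷ N) ≫ l = (λ_ N).hom)
    (hl_assoc : (A.mon.mul ▷ N) ≫ l = (α_ A.X A.X N).hom ≫ (A.X ◁ l) ≫ l) :
    ∃ s : coequalizer (r ▷ N) ((α_ M A.X N).hom ≫ (M ◁ l)) ⟶ M ⊗ N,
      s ≫ coequalizer.π (r ▷ N) ((α_ M A.X N).hom ≫ (M ◁ l)) =
        𝟙 (coequalizer (r ▷ N) ((α_ M A.X N).hom ≫ (M ◁ l))) := by
  obtain ⟨σ, hσ1, hσ2, hσ3⟩ := hA
  have heμ : (A.mon.one ≫ σ) ≫ A.mon.mul = A.mon.one := by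
    rw [Category.assoc, hσ1, Category.comp_id]
  have hul := sep_hul A N l (A.mon.one ≫ σ) heμ hl_one hl_assoc
  have hlv := sep_hlv A N l σ (A.mon.one ≫ σ) (sep_casR A σ hσ3) hl_assoc
  have hcoeq := sep_hcoeq A M N r l σ (A.mon.one ≫ σ) (sep_casL A σ hσ2) hr_assoc hlv
  refine ⟨coequalizer.desc ((M ◁ ((λ_ N).inv ≫ ((A.mon.one ≫ σ) ▷ N) ≫ (α_ A.X A.X N).hom ≫
      (A.X ◁ l))) ≫ (α_ M A.X N).inv ≫ (r ▷ N)) hcoeq, ?_⟩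
  apply coequalizer.hom_ext
  rw [coequalizer.π_desc_assoc, Category.comp_id]
  slice_lhs 3 4 => rw [coequalizer.condition]
  slice_lhs 2 3 => rw [Iso.inv_hom_id]
  rw [Category.id_comp, ← MonoidalCategory.whiskerLeft_comp_assoc, Category.assoc,
    Category.assoc, Category.assoc]
  have hul' : (λ_ N).inv ≫ ((A.mon.one ≫ σ) ▷ N) ≫ (α_ A.X A.X N).hom ≫ (A.X ◁ l) ≫ l = 𝟙 N := by
    simpa only [Category.assoc] using hul
  rw [hul', MonoidalCategory.whiskerLeft_id, Category.id_comp]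
end
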